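/- arXiv:1508.01260 — 8 statements merged into one kernel-verified Lean document; each statement's English description precedes it below -/
import Mathlib

section
/- If (T₁, T₂) is the compression of a pair of doubly commuting isometries (V₁, V₂) to a common co-invariant subspace, then the operator 1 - T₁T₁* - T₂T₂* + T₁T₂T₁*T₂* is positive. -/
open ContinuousLinearMap

local notation "⟪" x ", " y "⟫" => @inner ℂ _ _ x y

/-- For an isometry `V`, `‖(1 - V V*) x‖² = ‖x‖² - ‖V* x‖²`. -/
lemma defect_norm_sq {H : Type*} [NormedAddCommGroup H] [InnerProductSpace ℂ H]
    [CompleteSpace H] (V : H →L[ℂ] H) (hV : ∀ x, ‖V x‖ = ‖x‖) (x : H) :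
    ‖(1 - V ∘L adjoint V) x‖ ^ 2 = ‖x‖ ^ 2 - ‖adjoint V x‖ ^ 2 := by
  have h1 : ⟪x, (V ∘L adjoint V) x⟫ = (‖adjoint V x‖ : ℂ) ^ 2 := by
    rw [comp_apply, ← adjoint_inner_left, inner_self_eq_norm_sq_to_K]
    norm_cast
  have h2 : ‖(V ∘L adjoint V) x‖ = ‖adjoint V x‖ := by rw [comp_apply, hV]
  have hsub : (1 - V ∘L adjoint V) x = x - (V ∘L adjoint V) x := rfl
  rw [hsub, @norm_sub_sq ℂ, h1, h2]
  have h3 : RCLike.re ((‖adjoint V x‖ : ℂ) ^ 2) = ‖adjoint V x‖ ^ 2 := by norm_cast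
  rw [h3]; ring

set_option maxHeartbeats 1600000 in
/-- If `(T₁, T₂)` is the compression of a pair of doubly commuting
isometries `(V₁, V₂)` to a common co-invariant (closed) subspace `M`, then
`1 - T₁T₁* - T₂T₂* + T₁T₂T₁*T₂*` is a positive operator. -/
theorem compression_of_doubly_commuting_isometries_defect_positive
    {H : Type*} [NormedAddCommGroup H] [InnerProductSpace ℂ H] [CompleteSpace H]
    (V₁ V₂ : H →L[ℂ] H)
    (hV₁ : ∀ x, ‖V₁ x‖ = ‖x‖) (hV₂ : ∀ x, ‖V₂ x‖ = ‖x‖)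
    (hcomm : V₁ ∘L V₂ = V₂ ∘L V₁)
    (hdcomm : adjoint V₁ ∘L V₂ = V₂ ∘L adjoint V₁)
    (M : Submodule ℂ H) [CompleteSpace M]
    (hco₁ : ∀ x ∈ M, adjoint V₁ x ∈ M) (hco₂ : ∀ x ∈ M, adjoint V₂ x ∈ M)
    (T₁ T₂ : M →L[ℂ] M)
    (hT₁ : ∀ x : M, T₁ x = M.orthogonalProjectionOnto (V₁ x))
    (hT₂ : ∀ x : M, T₂ x = M.orthogonalProjectionOnto (V₂ x)) :
    (1 - T₁ ∘L adjoint T₁ - T₂ ∘L adjoint T₂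
        + T₁ ∘L T₂ ∘L adjoint T₁ ∘L adjoint T₂).IsPositive := by
  -- adjoint of Tⱼ is the restriction of the adjoint of Vⱼ
  have hadj₁ : ∀ x : M, ((adjoint T₁ x : M) : H) = adjoint V₁ (x : H) := by
    intro x
    have : adjoint T₁ x = (⟨adjoint V₁ (x : H), hco₁ _ x.2⟩ : M) := by
      apply ext_inner_right ℂ
      intro y
      rw [adjoint_inner_left, hT₁, Submodule.inner_orthogonalProjectionOnto_eq_of_mem_left,
        Submodule.coe_inner, adjoint_inner_left]
    rw [this]
  have hadj₂ : ∀ x : M, ((adjoint T₂ x : M) : H) = adjoint V₂ (x : H) := by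
    intro x
    have : adjoint T₂ x = (⟨adjoint V₂ (x : H), hco₂ _ x.2⟩ : M) := by
      apply ext_inner_right ℂ
      intro y
      rw [adjoint_inner_left, hT₂, Submodule.inner_orthogonalProjectionOnto_eq_of_mem_left,
        Submodule.coe_inner, adjoint_inner_left]
    rw [this]
  -- commutation of adjoints of V
  have hVadj : adjoint V₁ ∘L adjoint V₂ = adjoint V₂ ∘L adjoint V₁ := by
    rw [← adjoint_comp, ← adjoint_comp, hcomm]
  have hVd' : adjoint V₂ ∘L V₁ = V₁ ∘L adjoint V₂ := by
    have := congrArg adjoint hdcomm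
    rwa [adjoint_comp, adjoint_comp, adjoint_adjoint] at this
  -- commutation of adjoints of T
  have hTadj : adjoint T₁ ∘L adjoint T₂ = adjoint T₂ ∘L adjoint T₁ := by
    ext x
    rw [comp_apply, comp_apply, hadj₁, hadj₂, hadj₂, hadj₁]
    simpa using DFunLike.congr_fun hVadj (x : H)
  have hTcomm : T₁ ∘L T₂ = T₂ ∘L T₁ := by
    have := congrArg adjoint hTadj
    rwa [adjoint_comp, adjoint_comp, adjoint_adjoint, adjoint_adjoint, eq_comm] at this
  have pt1 : ∀ z : M, adjoint T₁ (adjoint T₂ z) = adjoint T₂ (adjoint T₁ z) := by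
    intro z; simpa using DFunLike.congr_fun hTadj z
  have pt2 : ∀ z : M, T₁ (T₂ z) = T₂ (T₁ z) := by
    intro z; simpa using DFunLike.congr_fun hTcomm z
  have hq : adjoint (T₁ ∘L T₂ ∘L adjoint T₁ ∘L adjoint T₂)
      = T₁ ∘L T₂ ∘L adjoint T₁ ∘L adjoint T₂ := by
    rw [adjoint_comp, adjoint_comp, adjoint_comp, adjoint_adjoint, adjoint_adjoint]
    ext x
    simp only [comp_apply]
    rw [pt1 x, pt2]
  have hone : adjoint (1 : M →L[ℂ] M) = 1 := by
    rw [← star_eq_adjoint]; exact star_one _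
  constructor
  · -- self-adjointness
    rw [← ContinuousLinearMap.isSelfAdjoint_iff_isSymmetric, ContinuousLinearMap.isSelfAdjoint_iff']
    rw [map_add, map_sub, map_sub, hq, hone, adjoint_comp, adjoint_adjoint,
      adjoint_comp, adjoint_adjoint]
  · intro x
    rw [reApplyInnerSelf_apply]
    -- compute the quadratic form in terms of V₁*, V₂*
    have hx1 : ⟪(1 : M →L[ℂ] M) x, x⟫ = (‖(x : H)‖ : ℂ) ^ 2 := by
      rw [one_apply_eq_self, inner_self_eq_norm_sq_to_K]
      norm_cast
    have hx2 : ⟪(T₁ ∘L adjoint T₁) x, x⟫ = (‖adjoint V₁ (x : H)‖ : ℂ) ^ 2 := by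
      rw [comp_apply, ← adjoint_inner_right, inner_self_eq_norm_sq_to_K]
      norm_cast
      rw [← hadj₁, Submodule.norm_coe]
      with_unfolding_all rfl
    have hx3 : ⟪(T₂ ∘L adjoint T₂) x, x⟫ = (‖adjoint V₂ (x : H)‖ : ℂ) ^ 2 := by
      rw [comp_apply, ← adjoint_inner_right, inner_self_eq_norm_sq_to_K]
      norm_cast
      rw [← hadj₂, Submodule.norm_coe]
      with_unfolding_all rfl
    have hx4 : ⟪(T₁ ∘L T₂ ∘L adjoint T₁ ∘L adjoint T₂) x, x⟫ =
        (‖adjoint V₁ (adjoint V₂ (x : H))‖ : ℂ) ^ 2 := by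
      have hre : (T₁ ∘L T₂ ∘L adjoint T₁ ∘L adjoint T₂) x =
          (T₁ ∘L T₂) ((adjoint T₁ ∘L adjoint T₂) x) := rfl
      rw [hre, ← adjoint_inner_right, adjoint_comp]
      rw [show adjoint T₂ ∘L adjoint T₁ = adjoint T₁ ∘L adjoint T₂ from hTadj.symm]
      rw [inner_self_eq_norm_sq_to_K]
      norm_cast
      rw [← Submodule.norm_coe ((adjoint T₁ ∘L adjoint T₂) x),
        show (((adjoint T₁ ∘L adjoint T₂) x : M) : H)
            = adjoint V₁ (adjoint V₂ (x : H)) by rw [comp_apply, hadj₁, hadj₂]]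
      with_unfolding_all rfl
    have hAx : ⟪(1 - T₁ ∘L adjoint T₁ - T₂ ∘L adjoint T₂
          + T₁ ∘L T₂ ∘L adjoint T₁ ∘L adjoint T₂) x, x⟫
        = ⟪(1 : M →L[ℂ] M) x, x⟫ - ⟪(T₁ ∘L adjoint T₁) x, x⟫
          - ⟪(T₂ ∘L adjoint T₂) x, x⟫
          + ⟪(T₁ ∘L T₂ ∘L adjoint T₁ ∘L adjoint T₂) x, x⟫ := by
      simp only [add_apply, sub_apply, inner_add_left, inner_sub_left]
    rw [hAx, hx1, hx2, hx3, hx4]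
    have hkey : RCLike.re ((‖(x : H)‖ : ℂ) ^ 2 - (‖adjoint V₁ (x : H)‖ : ℂ) ^ 2
          - (‖adjoint V₂ (x : H)‖ : ℂ) ^ 2 + (‖adjoint V₁ (adjoint V₂ (x : H))‖ : ℂ) ^ 2)
        = ‖(x : H)‖ ^ 2 - ‖adjoint V₁ (x : H)‖ ^ 2 - ‖adjoint V₂ (x : H)‖ ^ 2
          + ‖adjoint V₁ (adjoint V₂ (x : H))‖ ^ 2 := by
      simp only [map_sub, map_add, ← Complex.ofReal_pow, RCLike.re_to_complex,
        Complex.ofReal_re]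
    rw [hkey]
    -- the scalar inequality
    set y := (x : H) with hy
    have h1 : ‖(1 - V₁ ∘L adjoint V₁) y‖ ^ 2 = ‖y‖ ^ 2 - ‖adjoint V₁ y‖ ^ 2 :=
      defect_norm_sq V₁ hV₁ y
    have h2 : ‖(1 - V₁ ∘L adjoint V₁) (adjoint V₂ y)‖ ^ 2
        = ‖adjoint V₂ y‖ ^ 2 - ‖adjoint V₁ (adjoint V₂ y)‖ ^ 2 :=
      defect_norm_sq V₁ hV₁ (adjoint V₂ y)
    have hcommE : (1 - V₁ ∘L adjoint V₁) (adjoint V₂ y)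
        = adjoint V₂ ((1 - V₁ ∘L adjoint V₁) y) := by
      have hc : (V₁ ∘L adjoint V₁) ∘L adjoint V₂ = adjoint V₂ ∘L (V₁ ∘L adjoint V₁) := by
        rw [comp_assoc, hVadj, ← comp_assoc, ← hVd', comp_assoc]
      calc (1 - V₁ ∘L adjoint V₁) (adjoint V₂ y)
          = adjoint V₂ y - ((V₁ ∘L adjoint V₁) ∘L adjoint V₂) y := rfl
        _ = adjoint V₂ y - (adjoint V₂ ∘L (V₁ ∘L adjoint V₁)) y := by rw [hc]
        _ = adjoint V₂ ((1 - V₁ ∘L adjoint V₁) y) := by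
            rw [comp_apply, ← map_sub]; rfl
    have hnorm : ‖adjoint V₂ ((1 - V₁ ∘L adjoint V₁) y)‖
        ≤ ‖(1 - V₁ ∘L adjoint V₁) y‖ := by
      have hV₂norm : ‖adjoint V₂‖ ≤ 1 := by
        rw [LinearIsometryEquiv.norm_map (adjoint : (H →L[ℂ] H) ≃ₗᵢ⋆[ℂ] (H →L[ℂ] H)) V₂]
        exact opNorm_le_bound _ zero_le_one (fun z => by rw [hV₂, one_mul])
      calc ‖adjoint V₂ ((1 - V₁ ∘L adjoint V₁) y)‖
          ≤ ‖adjoint V₂‖ * ‖(1 - V₁ ∘L adjoint V₁) y‖ := le_opNorm _ _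
        _ ≤ 1 * ‖(1 - V₁ ∘L adjoint V₁) y‖ :=
            mul_le_mul_of_nonneg_right hV₂norm (norm_nonneg _)
        _ = _ := one_mul _
    have hle : ‖(1 - V₁ ∘L adjoint V₁) (adjoint V₂ y)‖ ^ 2
        ≤ ‖(1 - V₁ ∘L adjoint V₁) y‖ ^ 2 := by
      rw [hcommE]
      exact pow_le_pow_left₀ (norm_nonneg _) hnorm 2
    nlinarith [h1, h2, hle]
end

section
/- Let H have orthonormal basis (e_I)_{I ∈ ℕ²} and let (T₁, T₂) be the 2-variable weighted shift with weights w_{I,j} = 1/2 if I = (0,0) and w_{I,j} = 1 otherwise. Then (1 - T₁T₁* - T₂T₂* + T₁T₂T₁*T₂*) e_{(1,1)} = -(3/4) e_{(1,1)}; in particular, 1 - T₁T₁* - T₂T₂* + T₁T₂T₁*T₂* is not a positive operator. -/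
open ContinuousLinearMap
open scoped InnerProductSpace ComplexConjugate

lemma lp_apply_eq_inner (g : lp (fun _ : ℕ × ℕ => ℂ) 2) (J : ℕ × ℕ) :
    (⟪lp.single 2 J (1 : ℂ), g⟫_ℂ) = g J := by
  rw [lp.inner_single_left]
  simp [RCLike.inner_apply]

lemma adj_apply_single (T : lp (fun _ : ℕ × ℕ => ℂ) 2 →L[ℂ] lp (fun _ : ℕ × ℕ => ℂ) 2)
    (w : ℕ × ℕ → ℂ) (σ : ℕ × ℕ → ℕ × ℕ)
    (hT : ∀ I, T (lp.single 2 I (1 : ℂ)) = w I • lp.single 2 (σ I) (1 : ℂ))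
    (K J : ℕ × ℕ) :
    (adjoint T (lp.single 2 K (1 : ℂ))) J
      = (starRingEnd ℂ) (w J) * (if K = σ J then 1 else 0) := by
  rw [← lp_apply_eq_inner, adjoint_inner_right, hT, inner_smul_left,
    lp.inner_single_left]
  rcases eq_or_ne K (σ J) with h | h
  · subst h; rw [lp.single_apply_self]; simp [RCLike.inner_apply]
  · rw [lp.single_apply_ne _ _ _ h.symm]; simp [h]

set_option maxHeartbeats 1000000 in
/-- For the 2-variable weighted shift `(T₁, T₂)` on `ℓ²(ℕ²)` with weights
`w_{I,j} = 1/2` for `I = (0,0)` and `w_{I,j} = 1` otherwise, one has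
`(1 - T₁T₁* - T₂T₂* + T₁T₂T₁*T₂*) e_{(1,1)} = -(3/4) e_{(1,1)}`; in particular this
operator is not positive. -/
theorem two_variable_weighted_shift_defect_not_positive
    (e : ℕ × ℕ → lp (fun _ : ℕ × ℕ => ℂ) 2)
    (he : ∀ I, e I = lp.single 2 I (1 : ℂ))
    (T₁ T₂ : lp (fun _ : ℕ × ℕ => ℂ) 2 →L[ℂ] lp (fun _ : ℕ × ℕ => ℂ) 2)
    (hT₁ : ∀ I : ℕ × ℕ,
      T₁ (e I) = (if I = (0, 0) then (1 / 2 : ℂ) else 1) • e (I.1 + 1, I.2))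
    (hT₂ : ∀ I : ℕ × ℕ,
      T₂ (e I) = (if I = (0, 0) then (1 / 2 : ℂ) else 1) • e (I.1, I.2 + 1)) :
    (1 - T₁ ∘L adjoint T₁ - T₂ ∘L adjoint T₂
        + T₁ ∘L T₂ ∘L adjoint T₁ ∘L adjoint T₂) (e (1, 1))
      = (-(3 / 4) : ℂ) • e (1, 1) ∧
    ¬ (1 - T₁ ∘L adjoint T₁ - T₂ ∘L adjoint T₂
        + T₁ ∘L T₂ ∘L adjoint T₁ ∘L adjoint T₂).IsPositive := by
  set w : ℕ × ℕ → ℂ := fun I => if I = (0, 0) then (1 / 2 : ℂ) else 1 with hw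
  have hT₁' : ∀ I : ℕ × ℕ, T₁ (lp.single 2 I (1 : ℂ))
      = w I • lp.single 2 (I.1 + 1, I.2) (1 : ℂ) := by
    intro I; rw [← he, ← he, hT₁]
  have hT₂' : ∀ I : ℕ × ℕ, T₂ (lp.single 2 I (1 : ℂ))
      = w I • lp.single 2 (I.1, I.2 + 1) (1 : ℂ) := by
    intro I; rw [← he, ← he, hT₂]
  have hA1 : adjoint T₁ (e (1, 1)) = e (0, 1) := by
    rw [he, he]
    apply lp.ext
    funext J
    rw [adj_apply_single T₁ w (fun I => (I.1 + 1, I.2)) hT₁' (1, 1) J]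
    rcases eq_or_ne J (0, 1) with h | h
    · subst h; simp [hw, lp.single_apply_self]
    · have h1 : ((1 : ℕ), (1 : ℕ)) ≠ (J.1 + 1, J.2) := by
        intro hh
        apply h
        obtain ⟨a, b⟩ := Prod.mk.inj hh
        exact Prod.ext (by omega) (by omega)
      rw [if_neg h1, mul_zero, lp.single_apply_ne _ _ _ h]
  have hA2 : adjoint T₂ (e (1, 1)) = e (1, 0) := by
    rw [he, he]
    apply lp.ext
    funext J
    rw [adj_apply_single T₂ w (fun I => (I.1, I.2 + 1)) hT₂' (1, 1) J]
    rcases eq_or_ne J (1, 0) with h | h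
    · subst h; simp [hw, lp.single_apply_self]
    · have h1 : ((1 : ℕ), (1 : ℕ)) ≠ (J.1, J.2 + 1) := by
        intro hh
        apply h
        obtain ⟨a, b⟩ := Prod.mk.inj hh
        exact Prod.ext (by omega) (by omega)
      rw [if_neg h1, mul_zero, lp.single_apply_ne _ _ _ h]
  have hA3 : adjoint T₁ (e (1, 0)) = (1 / 2 : ℂ) • e (0, 0) := by
    rw [he, he]
    apply lp.ext
    funext J
    rw [lp.coeFn_smul, Pi.smul_apply, smul_eq_mul,
      adj_apply_single T₁ w (fun I => (I.1 + 1, I.2)) hT₁' (1, 0) J]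
    rcases eq_or_ne J (0, 0) with h | h
    · subst h
      rw [lp.single_apply_self]
      simp [hw, map_div₀, Complex.conj_ofNat]
    · have h1 : ((1 : ℕ), (0 : ℕ)) ≠ (J.1 + 1, J.2) := by
        intro hh
        apply h
        obtain ⟨a, b⟩ := Prod.mk.inj hh
        exact Prod.ext (by omega) (by omega)
      rw [if_neg h1, mul_zero, lp.single_apply_ne _ _ _ h, mul_zero]
  have key : (1 - T₁ ∘L adjoint T₁ - T₂ ∘L adjoint T₂
        + T₁ ∘L T₂ ∘L adjoint T₁ ∘L adjoint T₂) (e (1, 1))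
      = (-(3 / 4) : ℂ) • e (1, 1) := by
    have e11 : T₁ (adjoint T₁ (e (1, 1))) = e (1, 1) := by
      rw [hA1, hT₁ (0, 1)]
      norm_num
    have e22 : T₂ (adjoint T₂ (e (1, 1))) = e (1, 1) := by
      rw [hA2, hT₂ (1, 0)]
      norm_num
    have eP : T₁ (T₂ (adjoint T₁ (adjoint T₂ (e (1, 1)))))
        = (1 / 4 : ℂ) • e (1, 1) := by
      rw [hA2, hA3, map_smul, hT₂ (0, 0), map_smul, map_smul, hT₁ (0, 1)]
      rw [smul_smul, smul_smul]
      norm_num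
    simp only [add_apply, sub_apply, ContinuousLinearMap.one_apply, comp_apply, e11, e22, eP]
    module
  refine ⟨key, ?_⟩
  rintro ⟨-, hpos⟩
  have hre := hpos (e (1, 1))
  rw [reApplyInnerSelf_apply, key, inner_smul_left] at hre
  have hnorm : (⟪e (1, 1), e (1, 1)⟫_ℂ) = 1 := by
    rw [he, lp.inner_single_left, lp.single_apply_self]
    simp [RCLike.inner_apply]
  rw [hnorm, mul_one, map_neg, map_div₀, Complex.conj_ofNat, Complex.conj_ofNat,
    show (-((3 : ℂ) / 4)) = ((-(3 / 4) : ℝ) : ℂ) by norm_num] at hre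
  simp at hre
  norm_num at hre
end

section
/- The 2-variable weighted shift (T₁, T₂) with weights w_{I,j} = 1/2 if I = (0,0) and w_{I,j} = 1 otherwise does not coextend to a pair of doubly commuting isometries; that is, (T₁*, T₂*) is not the restriction of the adjoints of any pair of doubly commuting isometries to a co-invariant subspace. -/
set_option maxHeartbeats 800000

open ContinuousLinearMap
open scoped InnerProductSpace

/-- If the inner products of `A (e_I)` against `v` match the coordinates of `w`,
then `adjoint A v = w`, for operators on `ℓ²(ℕ × ℕ)`. -/
lemma adjoint_eq_of_inner (A : lp (fun _ : ℕ × ℕ => ℂ) 2 →L[ℂ] lp (fun _ : ℕ × ℕ => ℂ) 2)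
    (v w : lp (fun _ : ℕ × ℕ => ℂ) 2)
    (h : ∀ I : ℕ × ℕ, ⟪A (lp.single 2 I (1 : ℂ)), v⟫_ℂ = w I) :
    adjoint A v = w := by
  apply lp.ext
  funext I
  have coord : ∀ f : lp (fun _ : ℕ × ℕ => ℂ) 2, ⟪lp.single 2 I (1 : ℂ), f⟫_ℂ = f I := by
    intro f
    rw [lp.inner_single_left]
    simp [RCLike.inner_apply]
  calc (adjoint A v : ∀ _ : ℕ × ℕ, ℂ) I = ⟪lp.single 2 I (1 : ℂ), adjoint A v⟫_ℂ :=
        (coord _).symm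
    _ = ⟪A (lp.single 2 I (1 : ℂ)), v⟫_ℂ := adjoint_inner_right A _ _
    _ = w I := h I

/-- The adjoint of an isometry is a contraction. -/
lemma adjoint_contraction {K : Type*} [NormedAddCommGroup K] [InnerProductSpace ℂ K]
    [CompleteSpace K] (V : K →L[ℂ] K) (hV : ∀ x, ‖V x‖ = ‖x‖) (y : K) :
    ‖adjoint V y‖ ≤ ‖y‖ := by
  have h1 : ⟪adjoint V y, adjoint V y⟫_ℂ = ⟪y, V (adjoint V y)⟫_ℂ :=
    adjoint_inner_left V (adjoint V y) y
  have h2 := re_inner_le_norm (𝕜 := ℂ) y (V (adjoint V y))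
  have h3 := inner_self_eq_norm_sq (𝕜 := ℂ) (adjoint V y)
  rw [hV] at h2
  rw [h1] at h3
  nlinarith [norm_nonneg (adjoint V y), norm_nonneg y]

/-- The Brehmer-type inequality necessary for a doubly commuting pair of isometries. -/
lemma doubly_commuting_ineq {K : Type*} [NormedAddCommGroup K] [InnerProductSpace ℂ K]
    [CompleteSpace K] (V₁ V₂ : K →L[ℂ] K)
    (hV₁ : ∀ x, ‖V₁ x‖ = ‖x‖) (hV₂ : ∀ x, ‖V₂ x‖ = ‖x‖)
    (hcomm : V₁ ∘L V₂ = V₂ ∘L V₁)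
    (hdcomm : adjoint V₁ ∘L V₂ = V₂ ∘L adjoint V₁) (u : K) :
    ‖adjoint V₂ u‖ ^ 2 - ‖adjoint V₁ (adjoint V₂ u)‖ ^ 2
      ≤ ‖u‖ ^ 2 - ‖adjoint V₁ u‖ ^ 2 := by
  -- V₂* V₁ = V₁ V₂*
  have hc : ∀ y, adjoint V₂ (V₁ y) = V₁ (adjoint V₂ y) := by
    intro y
    have h := congrArg adjoint hdcomm
    rw [adjoint_comp, adjoint_comp, adjoint_adjoint] at h
    have := DFunLike.congr_fun h y
    simpa using this
  -- V₁* V₂* = V₂* V₁*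
  have hs : adjoint V₂ (adjoint V₁ u) = adjoint V₁ (adjoint V₂ u) := by
    have h := congrArg adjoint hcomm
    rw [adjoint_comp, adjoint_comp] at h
    have := DFunLike.congr_fun h u
    simpa using this
  set w := adjoint V₁ (adjoint V₂ u) with hw
  set z := u - V₁ (adjoint V₁ u) with hzdef
  have hz : ‖z‖ ^ 2 = ‖u‖ ^ 2 - ‖adjoint V₁ u‖ ^ 2 := by
    rw [hzdef, @norm_sub_sq ℂ]
    have h1 : ⟪u, V₁ (adjoint V₁ u)⟫_ℂ = ⟪adjoint V₁ u, adjoint V₁ u⟫_ℂ :=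
      (adjoint_inner_left V₁ (adjoint V₁ u) u).symm
    rw [h1, inner_self_eq_norm_sq, hV₁]
    ring
  have hz2 : ‖adjoint V₂ z‖ ^ 2 = ‖adjoint V₂ u‖ ^ 2 - ‖w‖ ^ 2 := by
    have hzz : adjoint V₂ z = adjoint V₂ u - V₁ w := by
      rw [hzdef, map_sub, hc, hs]
    rw [hzz, @norm_sub_sq ℂ]
    have h1 : ⟪adjoint V₂ u, V₁ w⟫_ℂ = ⟪w, w⟫_ℂ :=
      (adjoint_inner_left V₁ w (adjoint V₂ u)).symm
    rw [h1, inner_self_eq_norm_sq, hV₁]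
    ring
  have hle : ‖adjoint V₂ z‖ ≤ ‖z‖ := adjoint_contraction V₂ hV₂ z
  have hle2 : ‖adjoint V₂ z‖ ^ 2 ≤ ‖z‖ ^ 2 :=
    pow_le_pow_left₀ (norm_nonneg _) hle 2
  rw [hz, hz2] at hle2
  linarith

/-- The 2-variable weighted shift `(T₁, T₂)` on `ℓ²(ℕ²)` with weights
`w_{I,j} = 1/2` for `I = (0,0)` and `1` otherwise does not coextend to a pair of doubly
commuting isometries: there is no Hilbert space `K`, isometric embedding `J : H → K`
and doubly commuting isometries `(V₁, V₂)` on `K` such that `J H` is co-invariant and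
`Tⱼ` is the compression of `Vⱼ` (equivalently, `Vⱼ* ∘ J = J ∘ Tⱼ*`). -/
theorem two_variable_weighted_shift_no_doubly_commuting_coextension
    (e : ℕ × ℕ → lp (fun _ : ℕ × ℕ => ℂ) 2)
    (he : ∀ I, e I = lp.single 2 I (1 : ℂ))
    (T₁ T₂ : lp (fun _ : ℕ × ℕ => ℂ) 2 →L[ℂ] lp (fun _ : ℕ × ℕ => ℂ) 2)
    (hT₁ : ∀ I : ℕ × ℕ,
      T₁ (e I) = (if I = (0, 0) then (1 / 2 : ℂ) else 1) • e (I.1 + 1, I.2))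
    (hT₂ : ∀ I : ℕ × ℕ,
      T₂ (e I) = (if I = (0, 0) then (1 / 2 : ℂ) else 1) • e (I.1, I.2 + 1))
    (K : Type*) [NormedAddCommGroup K] [InnerProductSpace ℂ K] [CompleteSpace K]
    (J : lp (fun _ : ℕ × ℕ => ℂ) 2 →ₗᵢ[ℂ] K)
    (V₁ V₂ : K →L[ℂ] K)
    (hV₁ : ∀ x, ‖V₁ x‖ = ‖x‖) (hV₂ : ∀ x, ‖V₂ x‖ = ‖x‖)
    (hcomm : V₁ ∘L V₂ = V₂ ∘L V₁)
    (hdcomm : adjoint V₁ ∘L V₂ = V₂ ∘L adjoint V₁)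
    (hcoext₁ : ∀ x, adjoint V₁ (J x) = J (adjoint T₁ x))
    (hcoext₂ : ∀ x, adjoint V₂ (J x) = J (adjoint T₂ x)) :
    False := by
  classical
  have hsingle : ∀ (I J : ℕ × ℕ), ⟪e I, e J⟫_ℂ = if I = J then 1 else 0 := by
    intro I J
    rw [he, he, lp.inner_single_left, lp.single_apply]
    by_cases h : I = J
    · simp [h, RCLike.inner_apply]
    · simp [h, RCLike.inner_apply, Ne.symm h]
  have hnorm : ∀ I : ℕ × ℕ, ‖e I‖ = 1 := by
    intro I
    rw [he]
    simpa using lp.norm_single (p := 2) (by norm_num) (fun _ : ℕ × ℕ => (1 : ℂ)) I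
  -- adjoint computations on basis vectors
  have hA₁ : adjoint T₁ (e (1, 1)) = e (0, 1) := by
    rw [he (0, 1)]
    apply adjoint_eq_of_inner
    intro I
    rw [← he I, hT₁ I, inner_smul_left, hsingle]
    rcases I with ⟨a, b⟩
    simp only [lp.single_apply, eq_rec_constant, Prod.mk.injEq]
    rcases eq_or_ne a 0 with ha | ha <;> rcases eq_or_ne b 1 with hb | hb <;>
      simp [ha, hb]
  have hA₂ : adjoint T₂ (e (1, 1)) = e (1, 0) := by
    rw [he (1, 0)]
    apply adjoint_eq_of_inner
    intro I
    rw [← he I, hT₂ I, inner_smul_left, hsingle]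
    rcases I with ⟨a, b⟩
    simp only [lp.single_apply, eq_rec_constant, Prod.mk.injEq]
    rcases eq_or_ne a 1 with ha | ha <;> rcases eq_or_ne b 0 with hb | hb <;>
      simp [ha, hb]
  have hA₃ : adjoint T₁ (e (1, 0)) = (1 / 2 : ℂ) • e (0, 0) := by
    apply adjoint_eq_of_inner
    intro I
    rw [← he I, hT₁ I, inner_smul_left, hsingle]
    rcases I with ⟨a, b⟩
    rw [he (0, 0), lp.coeFn_smul, Pi.smul_apply]
    simp only [lp.single_apply, eq_rec_constant, Prod.mk.injEq, smul_eq_mul]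
    rcases eq_or_ne a 0 with ha | ha <;> rcases eq_or_ne b 0 with hb | hb <;>
      simp [ha, hb, map_ofNat]
  -- transfer to K
  set u := J (e (1, 1)) with hu
  have h1 : adjoint V₁ u = J (e (0, 1)) := by rw [hu, hcoext₁, hA₁]
  have h2 : adjoint V₂ u = J (e (1, 0)) := by rw [hu, hcoext₂, hA₂]
  have h12 : adjoint V₁ (adjoint V₂ u) = J ((1 / 2 : ℂ) • e (0, 0)) := by
    rw [h2, hcoext₁, hA₃]
  have key := doubly_commuting_ineq V₁ V₂ hV₁ hV₂ hcomm hdcomm u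
  rw [h12, h1, h2, hu] at key
  simp only [J.norm_map, norm_smul, hnorm] at key
  norm_num at key
end

section
/- Suppose (w_{I,j}) is a family of nonzero complex numbers indexed by multi-indices I ∈ ℕ^d with |I| ≤ N and j ∈ {1,…,d}, satisfying the commutation relations w_{I,j} w_{I+εⱼ,k} = w_{I,k} w_{I+ε_k,j} for |I| ≤ N-1. Then there exists a family (λ_I)_{|I| ≤ N+1} of unimodular complex numbers with λ_{(0,…,0)} = 1 and λ_{I+εⱼ} = λ_I w_{I,j}/|w_{I,j}| for all |I| ≤ N and all j (i.e., the recursive definition is consistent). -/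
lemma suppNonempty {d : ℕ} (I : Fin d → ℕ) (h : I ≠ 0) :
    (Finset.univ.filter fun j => I j ≠ 0).Nonempty := by
  obtain ⟨j, hj⟩ := Function.ne_iff.mp h
  exact ⟨j, Finset.mem_filter.mpr ⟨Finset.mem_univ _, hj⟩⟩

def minSupp {d : ℕ} (I : Fin d → ℕ) (h : I ≠ 0) : Fin d :=
  (Finset.univ.filter fun j => I j ≠ 0).min' (suppNonempty I h)

lemma minSupp_spec {d : ℕ} (I : Fin d → ℕ) (h : I ≠ 0) : I (minSupp I h) ≠ 0 := by
  have := Finset.min'_mem (Finset.univ.filter fun j => I j ≠ 0) (suppNonempty I h)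
  exact (Finset.mem_filter.mp this).2

lemma minSupp_le {d : ℕ} (I : Fin d → ℕ) (h : I ≠ 0) {j : Fin d} (hj : I j ≠ 0) :
    minSupp I h ≤ j :=
  Finset.min'_le _ j (Finset.mem_filter.mpr ⟨Finset.mem_univ _, hj⟩)

lemma sum_sub_single {d : ℕ} (I : Fin d → ℕ) (m : Fin d) (hm : I m ≠ 0) :
    (∑ i, (I - Pi.single m 1 : Fin d → ℕ) i) + 1 = ∑ i, I i := by
  have h1 : (I - Pi.single m 1 : Fin d → ℕ) + Pi.single m 1 = I := by
    funext i
    by_cases hi : i = m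
    · subst hi; simp [Pi.single_apply]; omega
    · simp [Pi.single_apply, hi]
  calc (∑ i, (I - Pi.single m 1 : Fin d → ℕ) i) + 1
      = ∑ i, ((I - Pi.single m 1 : Fin d → ℕ) i + (Pi.single m 1 : Fin d → ℕ) i) := by
        rw [Finset.sum_add_distrib, Finset.sum_pi_single']
        simp
    _ = ∑ i, (((I - Pi.single m 1 : Fin d → ℕ) + Pi.single m 1 : Fin d → ℕ)) i := rfl
    _ = ∑ i, I i := by rw [h1]

noncomputable def lamAux {d : ℕ} (u : (Fin d → ℕ) → Fin d → ℂ) (I : Fin d → ℕ) : ℂ :=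
  if h : I = 0 then 1
  else
    lamAux u (I - Pi.single (minSupp I h) 1) *
      u (I - Pi.single (minSupp I h) 1) (minSupp I h)
termination_by ∑ i, I i
decreasing_by
  have := sum_sub_single I (minSupp I h) (minSupp_spec I h)
  omega

lemma lamAux_zero {d : ℕ} (u : (Fin d → ℕ) → Fin d → ℂ) : lamAux u 0 = 1 := by
  rw [lamAux]; simp

lemma lamAux_ne {d : ℕ} (u : (Fin d → ℕ) → Fin d → ℂ) (I : Fin d → ℕ) (h : I ≠ 0) :
    lamAux u I =
      lamAux u (I - Pi.single (minSupp I h) 1) *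
        u (I - Pi.single (minSupp I h) 1) (minSupp I h) := by
  rw [lamAux]; simp [h]

lemma lamAux_rec {d N : ℕ} (u : (Fin d → ℕ) → Fin d → ℂ)
    (hu : ∀ (I : Fin d → ℕ) (j k : Fin d), (∑ i, I i) + 1 ≤ N →
      u I j * u (I + Pi.single j 1) k = u I k * u (I + Pi.single k 1) j) :
    ∀ (n : ℕ) (I : Fin d → ℕ) (j : Fin d), (∑ i, I i) = n → n ≤ N →
      lamAux u (I + Pi.single j 1) = lamAux u I * u I j := by
  intro n
  induction n using Nat.strong_induction_on with
  | _ n ih =>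
    intro I j hn hN
    have hIj : I + Pi.single j 1 ≠ 0 := by
      intro hc
      have h2 := congrFun hc j
      simp [Pi.single_apply] at h2
    rw [lamAux_ne u _ hIj]
    generalize hM : minSupp (I + Pi.single j 1) hIj = m
    by_cases hmj : m = j
    · have key : (I + Pi.single j 1) - Pi.single m 1 = I := by
        funext i; subst hmj; simp [Pi.single_apply]
      rw [key, hmj]
    · -- m ≠ j, so I m ≠ 0
      have hIm : I m ≠ 0 := by
        have h3 := minSupp_spec (I + Pi.single j 1) hIj
        rw [hM] at h3
        simpa [Pi.single_apply, hmj] using h3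
      have hI0 : I ≠ 0 := fun hc => hIm (by rw [hc]; rfl)
      have hmm : minSupp I hI0 = m := by
        refine le_antisymm (minSupp_le I hI0 hIm) ?_
        rw [← hM]
        apply minSupp_le
        have h4 := minSupp_spec I hI0
        simp only [Pi.add_apply, Pi.single_apply]
        omega
      have hJI : (I - Pi.single m 1 : Fin d → ℕ) + Pi.single m 1 = I := by
        funext i
        by_cases hi : i = m
        · subst hi; simp [Pi.single_apply]; omega
        · simp [Pi.single_apply, hi]
      have hsum : (∑ i, (I - Pi.single m 1 : Fin d → ℕ) i) + 1 = n := by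
        have := sum_sub_single I m hIm; omega
      have key : (I + Pi.single j 1) - Pi.single m 1
          = (I - Pi.single m 1 : Fin d → ℕ) + Pi.single j 1 := by
        funext i
        by_cases hi : i = m
        · subst hi
          have hji : j ≠ i := fun h => hmj h.symm
          have hne : (Pi.single j 1 : Fin d → ℕ) i = 0 := by
            simp [Pi.single_apply, hji]
          simp only [Pi.add_apply, Pi.sub_apply, hne]
          simp
        · simp only [Pi.add_apply, Pi.sub_apply, Pi.single_apply]
          simp [hi]
      rw [key]
      rw [ih (n - 1) (by omega) (I - Pi.single m 1) j (by omega) (by omega)]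
      have hcom := hu (I - Pi.single m 1) j m (by omega)
      rw [hJI] at hcom
      rw [mul_assoc, hcom, lamAux_ne u I hI0, hmm]
      ring

/-- Given nonzero complex weights `w_{I,j}` for multi-indices `I ∈ ℕ^d`
with `|I| ≤ N` satisfying the commutation relations
`w_{I,j} w_{I+εⱼ,k} = w_{I,k} w_{I+ε_k,j}` for `|I| ≤ N - 1`, there is a consistent family
of unimodular constants `λ_I` for `|I| ≤ N + 1` with `λ_0 = 1` and
`λ_{I+εⱼ} = λ_I · w_{I,j}/|w_{I,j}|`. -/
theorem unimodular_family_consistent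
    (d N : ℕ) (w : (Fin d → ℕ) → Fin d → ℂ)
    (hw : ∀ I : Fin d → ℕ, (∑ i, I i) ≤ N → ∀ j, w I j ≠ 0)
    (hcomm : ∀ (I : Fin d → ℕ) (j k : Fin d), (∑ i, I i) + 1 ≤ N →
      w I j * w (I + Pi.single j 1) k = w I k * w (I + Pi.single k 1) j) :
    ∃ lam : (Fin d → ℕ) → ℂ,
      (∀ I : Fin d → ℕ, (∑ i, I i) ≤ N + 1 → ‖lam I‖ = 1) ∧
      lam 0 = 1 ∧
      ∀ (I : Fin d → ℕ) (j : Fin d), (∑ i, I i) ≤ N →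
        lam (I + Pi.single j 1) = lam I * (w I j / ((‖w I j‖ : ℝ) : ℂ)) := by
  set u : (Fin d → ℕ) → Fin d → ℂ := fun I j => w I j / ((‖w I j‖ : ℝ) : ℂ) with hu_def
  have habs : ∀ (I : Fin d → ℕ) (j : Fin d), (∑ i, I i) ≤ N → ‖u I j‖ = 1 := by
    intro I j hI
    have hwne := hw I hI j
    have hne : ‖w I j‖ ≠ 0 := by
      simpa using hwne
    simp only [hu_def, norm_div, Complex.norm_real, Real.norm_eq_abs,
      abs_of_nonneg (norm_nonneg _)]
    exact div_self hne
  have hu : ∀ (I : Fin d → ℕ) (j k : Fin d), (∑ i, I i) + 1 ≤ N →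
      u I j * u (I + Pi.single j 1) k = u I k * u (I + Pi.single k 1) j := by
    intro I j k h
    simp only [hu_def, div_mul_div_comm]
    rw [hcomm I j k h]
    congr 1
    norm_cast
    rw [← norm_mul, ← norm_mul, hcomm I j k h]
  have main : ∀ (n : ℕ) (I : Fin d → ℕ), (∑ i, I i) = n → n ≤ N + 1 →
      ‖lamAux u I‖ = 1 := by
    intro n
    induction n using Nat.strong_induction_on with
    | _ n ih =>
      intro I hn hN
      by_cases h0 : I = 0
      · subst h0; rw [lamAux_zero]; simp
      · rw [lamAux_ne u I h0]
        have hIm := minSupp_spec I h0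
        have hsum := sum_sub_single I (minSupp I h0) hIm
        rw [norm_mul, ih (n - 1) (by omega) _ (by omega) (by omega),
          habs _ _ (by omega), one_mul]
  refine ⟨lamAux u, ?_, lamAux_zero u, ?_⟩
  · intro I hI
    exact main (∑ i, I i) I rfl hI
  · intro I j hI
    exact lamAux_rec u hu (∑ i, I i) I j rfl hI
end

section
/- Consider the 3×3 complex matrix polynomial p(z₁,z₂,z₃) = [[z₁, z₂, 0], [z₃, 0, z₂], [0, z₃, -z₁]]. Then sup{ ‖p(z₁,z₂,z₃)‖ : z₁, z₂, z₃ ∈ closed unit disc } = √3, where ‖·‖ denotes the operator norm on ℂ³. -/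
open Real

private lemma parrott_normSq_identity (z₁ z₂ z₃ x y z : ℂ) :
    Complex.normSq (z₁*x + z₂*y) + Complex.normSq (z₃*x + z₂*z)
      + Complex.normSq (z₃*y - z₁*z)
      + Complex.normSq ((starRingEnd ℂ) z₂ * x - (starRingEnd ℂ) z₁ * y - (starRingEnd ℂ) z₃ * z)
    = (Complex.normSq z₁ + Complex.normSq z₂ + Complex.normSq z₃)
        * (Complex.normSq x + Complex.normSq y + Complex.normSq z) := by
  simp only [Complex.normSq_apply, Complex.mul_re, Complex.mul_im, Complex.add_re,
    Complex.add_im, Complex.sub_re, Complex.sub_im, Complex.conj_re, Complex.conj_im]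
  ring

private lemma parrott_upper (z₁ z₂ z₃ : ℂ) (h₁ : ‖z₁‖ ≤ 1)
    (h₂ : ‖z₂‖ ≤ 1) (h₃ : ‖z₃‖ ≤ 1) :
    ‖Matrix.toEuclideanCLM (𝕜 := ℂ) !![z₁, z₂, 0; z₃, 0, z₂; 0, z₃, -z₁]‖ ≤ Real.sqrt 3 := by
  apply ContinuousLinearMap.opNorm_le_bound _ (Real.sqrt_nonneg 3)
  intro v
  have hv0 : Matrix.toEuclideanCLM (𝕜 := ℂ) !![z₁, z₂, 0; z₃, 0, z₂; 0, z₃, -z₁] v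
      = (WithLp.equiv 2 (Fin 3 → ℂ)).symm
          ![z₁ * v 0 + z₂ * v 1, z₃ * v 0 + z₂ * v 2, z₃ * v 1 - z₁ * v 2] := by
    apply (WithLp.equiv 2 (Fin 3 → ℂ)).injective
    funext i
    have : (WithLp.equiv 2 (Fin 3 → ℂ))
        (Matrix.toEuclideanCLM (𝕜 := ℂ) !![z₁, z₂, 0; z₃, 0, z₂; 0, z₃, -z₁] v)
        = Matrix.toLin' !![z₁, z₂, 0; z₃, 0, z₂; 0, z₃, -z₁] (WithLp.equiv 2 (Fin 3 → ℂ) v) :=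
      Matrix.ofLp_toEuclideanCLM _ _
    rw [this]
    fin_cases i <;>
      simp [Matrix.toLin'_apply, Matrix.mulVec, dotProduct, Fin.sum_univ_three,
        WithLp.equiv_symm_apply, PiLp.toLp_apply] <;> ring
  rw [hv0]
  rw [EuclideanSpace.norm_eq, EuclideanSpace.norm_eq]
  rw [← Real.sqrt_mul (by norm_num : (0:ℝ) ≤ 3)]
  apply Real.sqrt_le_sqrt
  simp only [Fin.sum_univ_three, WithLp.equiv_symm_apply, PiLp.toLp_apply, Matrix.cons_val_zero,
    Matrix.cons_val_one, Matrix.head_cons, Matrix.cons_val_two, Matrix.tail_cons]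
  have key := parrott_normSq_identity z₁ z₂ z₃ (v 0) (v 1) (v 2)
  have e1 : Complex.normSq z₁ ≤ 1 := by
    have := Complex.sq_norm z₁; nlinarith [norm_nonneg z₁]
  have e2 : Complex.normSq z₂ ≤ 1 := by
    have := Complex.sq_norm z₂; nlinarith [norm_nonneg z₂]
  have e3 : Complex.normSq z₃ ≤ 1 := by
    have := Complex.sq_norm z₃; nlinarith [norm_nonneg z₃]
  have n0 : (0:ℝ) ≤ Complex.normSq ((starRingEnd ℂ) z₂ * v 0 - (starRingEnd ℂ) z₁ * v 1
      - (starRingEnd ℂ) z₃ * v 2) := Complex.normSq_nonneg _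
  simp only [Complex.sq_norm]
  nlinarith [Complex.normSq_nonneg (v 0), Complex.normSq_nonneg (v 1),
    Complex.normSq_nonneg (v 2), Complex.normSq_nonneg z₁, Complex.normSq_nonneg z₂,
    Complex.normSq_nonneg z₃]

private lemma parrott_value_one :
    ‖Matrix.toEuclideanCLM (𝕜 := ℂ) !![(1:ℂ), 1, 0; 1, 0, 1; 0, 1, -1]‖ = Real.sqrt 3 := by
  refine le_antisymm ?_ ?_
  · have := parrott_upper 1 1 1 (by simp) (by simp) (by simp)
    simpa using this
  · set T := Matrix.toEuclideanCLM (𝕜 := ℂ) !![(1:ℂ), 1, 0; 1, 0, 1; 0, 1, -1] with hT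
    set v : EuclideanSpace ℂ (Fin 3) := (WithLp.equiv 2 (Fin 3 → ℂ)).symm ![1, 1, 0] with hv
    have hTv : T v = (WithLp.equiv 2 (Fin 3 → ℂ)).symm ![2, 1, 1] := by
      apply (WithLp.equiv 2 (Fin 3 → ℂ)).injective
      funext i
      have : (WithLp.equiv 2 (Fin 3 → ℂ)) (T v)
          = Matrix.toLin' !![(1:ℂ), 1, 0; 1, 0, 1; 0, 1, -1] (WithLp.equiv 2 (Fin 3 → ℂ) v) :=
        Matrix.ofLp_toEuclideanCLM _ _
      rw [this]
      fin_cases i <;>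
        simp [hv, Matrix.toLin'_apply, Matrix.mulVec, dotProduct, Fin.sum_univ_three,
          WithLp.equiv_symm_apply, PiLp.toLp_apply] <;> norm_num
    have hnTv : ‖T v‖ = Real.sqrt 6 := by
      rw [hTv, EuclideanSpace.norm_eq]
      simp only [Fin.sum_univ_three, WithLp.equiv_symm_apply, PiLp.toLp_apply, Matrix.cons_val_zero,
        Matrix.cons_val_one, Matrix.head_cons, Matrix.cons_val_two, Matrix.tail_cons]
      norm_num
    have hnv : ‖v‖ = Real.sqrt 2 := by
      rw [hv, EuclideanSpace.norm_eq]
      simp only [Fin.sum_univ_three, WithLp.equiv_symm_apply, PiLp.toLp_apply, Matrix.cons_val_zero,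
        Matrix.cons_val_one, Matrix.head_cons, Matrix.cons_val_two, Matrix.tail_cons]
      norm_num
    have hle := T.le_opNorm v
    rw [hnTv, hnv] at hle
    have h6 : Real.sqrt 6 = Real.sqrt 3 * Real.sqrt 2 := by
      rw [← Real.sqrt_mul (by norm_num)]; norm_num
    have h2 : (0:ℝ) < Real.sqrt 2 := by positivity
    nlinarith

/-- For the matrix polynomial
`p(z₁,z₂,z₃) = [[z₁, z₂, 0], [z₃, 0, z₂], [0, z₃, -z₁]]`, the supremum of the operator
norm `‖p(z₁,z₂,z₃)‖` over the closed unit polydisc equals `√3`. -/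
theorem parrott_polynomial_sup_on_polydisc :
    sSup {x : ℝ | ∃ z₁ z₂ z₃ : ℂ,
        ‖z₁‖ ≤ 1 ∧ ‖z₂‖ ≤ 1 ∧ ‖z₃‖ ≤ 1 ∧
        x = ‖Matrix.toEuclideanCLM (𝕜 := ℂ)
              !![z₁, z₂, 0; z₃, 0, z₂; 0, z₃, -z₁]‖}
      = Real.sqrt 3 := by
  apply le_antisymm
  · apply csSup_le
    · exact ⟨Real.sqrt 3, 1, 1, 1, by simp, by simp, by simp, parrott_value_one.symm⟩
    · rintro x ⟨z₁, z₂, z₃, h₁, h₂, h₃, rfl⟩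
      exact parrott_upper z₁ z₂ z₃ h₁ h₂ h₃
  · apply le_csSup
    · refine ⟨Real.sqrt 3, ?_⟩
      rintro x ⟨z₁, z₂, z₃, h₁, h₂, h₃, rfl⟩
      exact parrott_upper z₁ z₂ z₃ h₁ h₂ h₃
    · exact ⟨1, 1, 1, by simp, by simp, by simp, parrott_value_one.symm⟩
end

section
/- The commuting contractions T₁, T₂, T₃ ∈ M₆(ℂ) defined by Tⱼ = [[0,0],[Aⱼ,0]] with A₁ = [[0,-1,0],[0,0,1],[0,0,0]], A₂ = [[1,0,0],[0,0,0],[0,0,1]], A₃ = [[0,0,0],[1,0,0],[0,1,0]] do not dilate to a triple of commuting unitaries: there is no Hilbert space K ⊇ ℂ⁶ and commuting unitaries U₁, U₂, U₃ on K with p(T₁,T₂,T₃) = P_{ℂ⁶} p(U₁,U₂,U₃)|_{ℂ⁶} for all polynomials p ∈ ℂ[z₁,z₂,z₃]. -/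
noncomputable def parrottA : Fin 3 → Matrix (Fin 3) (Fin 3) ℂ :=
  ![!![0, -1, 0; 0, 0, 1; 0, 0, 0],
    !![1, 0, 0; 0, 0, 0; 0, 0, 1],
    !![0, 0, 0; 1, 0, 0; 0, 1, 0]]

noncomputable def parrottT : Fin 3 → Matrix (Fin 3 ⊕ Fin 3) (Fin 3 ⊕ Fin 3) ℂ :=
  fun j => Matrix.fromBlocks 0 0 (parrottA j) 0

/-- The operators `T₁, T₂, T₃` as continuous linear maps on Euclidean `ℂ⁶`. -/
noncomputable def parrottTclm :
    Fin 3 → (EuclideanSpace ℂ (Fin 3 ⊕ Fin 3) →L[ℂ] EuclideanSpace ℂ (Fin 3 ⊕ Fin 3)) :=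
  fun j => Matrix.toEuclideanCLM (𝕜 := ℂ) (parrottT j)


lemma parrottTclm_single (j : Fin 3) (i : Fin 3) (i' : Fin 3) (c : ℂ)
    (h : ∀ r : Fin 3, parrottA j r i = if r = i' then c else 0) :
    parrottTclm j (EuclideanSpace.single (Sum.inl i) (1:ℂ))
      = EuclideanSpace.single (Sum.inr i') c := by
  have h0 : parrottTclm j (EuclideanSpace.single (Sum.inl i) (1:ℂ))
      = Matrix.toEuclideanLin (parrottT j) (EuclideanSpace.single (Sum.inl i) (1:ℂ)) := rfl
  rw [h0]
  apply (WithLp.equiv 2 ((Fin 3 ⊕ Fin 3) → ℂ)).injective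
  change Matrix.mulVec (parrottT j) (WithLp.ofLp (EuclideanSpace.single (Sum.inl i) (1:ℂ)))
    = WithLp.ofLp (EuclideanSpace.single (Sum.inr i') c)
  rw [EuclideanSpace.ofLp_single, EuclideanSpace.ofLp_single,
    Matrix.mulVec_single]
  funext r
  rcases r with r | r
  · simp [parrottT, Pi.single_apply]
  · simp [parrottT, Pi.single_apply, h r]

/-- Exactness: if a unitary compresses on a vector to an isometric image inside the
subspace, then it maps that vector exactly into the subspace. -/
lemma dilation_exact {K : Type*} [NormedAddCommGroup K] [InnerProductSpace ℂ K]
    [CompleteSpace K]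
    (J : EuclideanSpace ℂ (Fin 3 ⊕ Fin 3) →ₗᵢ[ℂ] K) (Uop : K →L[ℂ] K)
    (hU : Uop ∈ unitary (K →L[ℂ] K))
    (x z : EuclideanSpace ℂ (Fin 3 ⊕ Fin 3))
    (hnorm : ‖z‖ = ‖x‖)
    (h : ∀ y, (inner ℂ z y : ℂ) = inner ℂ (Uop (J x)) (J y)) :
    Uop (J x) = J z := by
  have h1 : ‖Uop (J x)‖ = ‖x‖ := by
    rw [Uop.norm_map_of_mem_unitary hU, J.norm_map]
  have h2 : (inner ℂ (Uop (J x)) (J z) : ℂ) = (‖z‖ : ℂ) ^ 2 := by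
    rw [← h z, inner_self_eq_norm_sq_to_K]
    norm_cast
  have key : ‖Uop (J x) - J z‖ ^ 2 = 0 := by
    rw [@norm_sub_sq ℂ, h1, J.norm_map, h2, hnorm]
    simp [← Complex.ofReal_pow, RCLike.re_to_complex]
    ring
  have := (pow_eq_zero_iff (two_ne_zero)).mp key
  rw [norm_eq_zero, sub_eq_zero] at this
  exact this

/-- The commuting contractions `T₁, T₂, T₃` do not dilate to a triple of
commuting unitaries: there is no Hilbert space `K ⊇ ℂ⁶` (given by an isometric embedding
`J`) and commuting unitaries `U₁, U₂, U₃` on `K` with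
`p(T₁,T₂,T₃) = P_{ℂ⁶} p(U₁,U₂,U₃)|_{ℂ⁶}` for all polynomials `p`; equivalently (by
linearity) for all monomials `z₁^{m₁} z₂^{m₂} z₃^{m₃}`. -/
theorem parrott_no_unitary_dilation
    (K : Type*) [NormedAddCommGroup K] [InnerProductSpace ℂ K] [CompleteSpace K]
    (J : EuclideanSpace ℂ (Fin 3 ⊕ Fin 3) →ₗᵢ[ℂ] K)
    (U : Fin 3 → (K →L[ℂ] K))
    (hU : ∀ j, U j ∈ unitary (K →L[ℂ] K))
    (hUcomm : ∀ j k, U j * U k = U k * U j)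
    (hdil : ∀ (m : Fin 3 → ℕ) (x y : EuclideanSpace ℂ (Fin 3 ⊕ Fin 3)),
      (inner ℂ ((List.ofFn fun j => parrottTclm j ^ m j).prod x) y : ℂ)
        = inner ℂ ((List.ofFn fun j => U j ^ m j).prod (J x)) (J y)) :
    False := by
  -- single-variable compressions
  have spec : ∀ (j : Fin 3) (x y : EuclideanSpace ℂ (Fin 3 ⊕ Fin 3)),
      (inner ℂ (parrottTclm j x) y : ℂ) = inner ℂ (U j (J x)) (J y) := by
    intro j x y
    fin_cases j
    · have := hdil ![1,0,0] x y
      simpa [List.ofFn_succ, Fin.isValue] using this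
    · have := hdil ![0,1,0] x y
      simpa [List.ofFn_succ, Fin.isValue] using this
    · have := hdil ![0,0,1] x y
      simpa [List.ofFn_succ, Fin.isValue] using this
  -- exact action on special basis vectors
  have act : ∀ (j i i' : Fin 3) (c : ℂ), ‖c‖ = 1 →
      (∀ r : Fin 3, parrottA j r i = if r = i' then c else 0) →
      U j (J (EuclideanSpace.single (Sum.inl i) (1:ℂ)))
        = J (EuclideanSpace.single (Sum.inr i') c) := by
    intro j i i' c hc hcol
    apply dilation_exact J (U j) (hU j)
    · rw [EuclideanSpace.norm_single, EuclideanSpace.norm_single, hc, norm_one]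
    · intro y
      rw [← spec j, parrottTclm_single j i i' c hcol]
  have comm : ∀ (j j' : Fin 3) (v : K), U j (U j' v) = U j' (U j v) := by
    intro j j' v
    have := congrArg (fun W : K →L[ℂ] K => W v) (hUcomm j j')
    simpa using this
  -- the six exact actions
  have a01 : U 0 (J (EuclideanSpace.single (Sum.inl 1) (1:ℂ)))
      = J (EuclideanSpace.single (Sum.inr 0) (-1:ℂ)) :=
    act 0 1 0 (-1) (by norm_num) (by intro r; fin_cases r <;> simp [parrottA, Fin.ext_iff, Matrix.vecHead, Matrix.vecTail])
  have a02 : U 0 (J (EuclideanSpace.single (Sum.inl 2) (1:ℂ)))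
      = J (EuclideanSpace.single (Sum.inr 1) (1:ℂ)) :=
    act 0 2 1 1 (by norm_num) (by intro r; fin_cases r <;> simp [parrottA, Fin.ext_iff, Matrix.vecHead, Matrix.vecTail])
  have a10 : U 1 (J (EuclideanSpace.single (Sum.inl 0) (1:ℂ)))
      = J (EuclideanSpace.single (Sum.inr 0) (1:ℂ)) :=
    act 1 0 0 1 (by norm_num) (by intro r; fin_cases r <;> simp [parrottA, Fin.ext_iff, Matrix.vecHead, Matrix.vecTail])
  have a12 : U 1 (J (EuclideanSpace.single (Sum.inl 2) (1:ℂ)))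
      = J (EuclideanSpace.single (Sum.inr 2) (1:ℂ)) :=
    act 1 2 2 1 (by norm_num) (by intro r; fin_cases r <;> simp [parrottA, Fin.ext_iff, Matrix.vecHead, Matrix.vecTail])
  have a20 : U 2 (J (EuclideanSpace.single (Sum.inl 0) (1:ℂ)))
      = J (EuclideanSpace.single (Sum.inr 1) (1:ℂ)) :=
    act 2 0 1 1 (by norm_num) (by intro r; fin_cases r <;> simp [parrottA, Fin.ext_iff, Matrix.vecHead, Matrix.vecTail])
  have a21 : U 2 (J (EuclideanSpace.single (Sum.inl 1) (1:ℂ)))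
      = J (EuclideanSpace.single (Sum.inr 2) (1:ℂ)) :=
    act 2 1 2 1 (by norm_num) (by intro r; fin_cases r <;> simp [parrottA, Fin.ext_iff, Matrix.vecHead, Matrix.vecTail])
  -- combine with commutativity
  have e1 : U 0 (J (EuclideanSpace.single (Sum.inr 2) (1:ℂ)))
      = U 1 (J (EuclideanSpace.single (Sum.inr 1) (1:ℂ))) := by
    have := comm 0 1 (J (EuclideanSpace.single (Sum.inl 2) (1:ℂ)))
    rwa [a12, a02] at this
  have e2 : U 0 (J (EuclideanSpace.single (Sum.inr 2) (1:ℂ)))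
      = U 2 (J (EuclideanSpace.single (Sum.inr 0) (-1:ℂ))) := by
    have := comm 0 2 (J (EuclideanSpace.single (Sum.inl 1) (1:ℂ)))
    rwa [a21, a01] at this
  have e3 : U 1 (J (EuclideanSpace.single (Sum.inr 1) (1:ℂ)))
      = U 2 (J (EuclideanSpace.single (Sum.inr 0) (1:ℂ))) := by
    have := comm 1 2 (J (EuclideanSpace.single (Sum.inl 0) (1:ℂ)))
    rwa [a20, a10] at this
  have hneg : EuclideanSpace.single (Sum.inr 0 : Fin 3 ⊕ Fin 3) (-1:ℂ)
      = -EuclideanSpace.single (Sum.inr 0 : Fin 3 ⊕ Fin 3) (1:ℂ) := by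
    ext r
    simp [EuclideanSpace.single_apply]
    split <;> simp
  have final : U 2 (J (EuclideanSpace.single (Sum.inr 0) (1:ℂ)))
      = -U 2 (J (EuclideanSpace.single (Sum.inr 0) (1:ℂ))) := by
    have t := e1.symm.trans e2
    rw [hneg, map_neg, map_neg] at t
    exact e3.symm.trans t
  have hz : U 2 (J (EuclideanSpace.single (Sum.inr 0) (1:ℂ))) = 0 := by
    have := add_eq_zero_iff_eq_neg.mpr final
    rw [← two_smul ℂ] at this
    simpa using this
  have hn : ‖U 2 (J (EuclideanSpace.single (Sum.inr 0) (1:ℂ)))‖ = 1 := by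
    rw [(U 2).norm_map_of_mem_unitary (hU 2), J.norm_map, EuclideanSpace.norm_single, norm_one]
  rw [hz, norm_zero] at hn
  norm_num at hn
end

section
/- Let X ⊆ ℂᴺ be compact, H a Hilbert space, and T: X → B(H)^d a function such that each coordinate extends analytically to a neighborhood of X and T(z) is a commuting tuple of contractions for each z ∈ X. Let K ⊆ X be a subset such that sup_X |f| = sup_K |f| for every function f analytic in a neighborhood of X. If ‖p(T(z))‖ ≤ sup_{w ∈ closed polydisc} |p(w)| for all z ∈ K and all polynomials p ∈ ℂ[z₁,…,z_d], then the same inequality holds for all z ∈ X. -/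
/-- Evaluation of a polynomial `p ∈ ℂ[z₁,…,z_d]` at a (commuting) tuple of operators:
`p(T) = ∑_m coeff(m) T₁^{m₁} ⋯ T_d^{m_d}`. -/
noncomputable def evalPolyAt {d : ℕ} {A : Type*} [Ring A] [Algebra ℂ A]
    (T : Fin d → A) (p : MvPolynomial (Fin d) ℂ) : A :=
  ∑ m ∈ p.support, MvPolynomial.coeff m p • (List.ofFn fun j => T j ^ m j).prod

/-- The supremum of `|p|` over the closed unit polydisc in `ℂ^d`. -/
noncomputable def polydiscSup {d : ℕ} (p : MvPolynomial (Fin d) ℂ) : ℝ :=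
  sSup {x : ℝ | ∃ z : Fin d → ℂ, (∀ j, ‖z j‖ ≤ 1) ∧
    x = ‖MvPolynomial.eval z p‖}

/-- Let `X ⊆ ℂᴺ` be compact and let `T : X → B(H)^d` be (coordinatewise)
analytic in a neighbourhood of `X`, taking values in commuting tuples of contractions.
Let `K ⊆ X` be a boundary for functions analytic in a neighbourhood of `X`, i.e.
`sup_X |f| = sup_K |f|` for all such `f`.  If von Neumann's inequality holds for `T(z)`
for all `z ∈ K`, then it holds for all `z ∈ X`. -/
theorem von_neumann_via_shilov_boundary
    {n d : ℕ} {H : Type*} [NormedAddCommGroup H] [InnerProductSpace ℂ H] [CompleteSpace H]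
    (X : Set (Fin n → ℂ)) (hX : IsCompact X)
    (T : (Fin n → ℂ) → Fin d → (H →L[ℂ] H))
    (Uo : Set (Fin n → ℂ)) (hUo : IsOpen Uo) (hXUo : X ⊆ Uo)
    (hT : ∀ j, AnalyticOnNhd ℂ (fun z => T z j) Uo)
    (hcomm : ∀ z ∈ X, ∀ j k, T z j * T z k = T z k * T z j)
    (hcontr : ∀ z ∈ X, ∀ j, ‖T z j‖ ≤ 1)
    (K : Set (Fin n → ℂ)) (hK : K ⊆ X)
    (hbdry : ∀ (V : Set (Fin n → ℂ)) (f : (Fin n → ℂ) → ℂ),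
      IsOpen V → X ⊆ V → AnalyticOnNhd ℂ f V →
      sSup ((fun z => ‖f z‖) '' X) = sSup ((fun z => ‖f z‖) '' K))
    (hvN : ∀ z ∈ K, ∀ p : MvPolynomial (Fin d) ℂ,
      ‖evalPolyAt (T z) p‖ ≤ polydiscSup p) :
    ∀ z ∈ X, ∀ p : MvPolynomial (Fin d) ℂ,
      ‖evalPolyAt (T z) p‖ ≤ polydiscSup p := by

  classical
  intro z hz p
  -- polydiscSup is nonnegative and the defining set is bounded above
  have hcompact : IsCompact {w : Fin d → ℂ | ∀ j, ‖w j‖ ≤ 1} := by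
    have : {w : Fin d → ℂ | ∀ j, ‖w j‖ ≤ 1}
        = Set.pi Set.univ (fun _ : Fin d => Metric.closedBall (0:ℂ) 1) := by
      ext w
      simp [Set.mem_pi, Metric.mem_closedBall, Complex.dist_eq]
    rw [this]
    exact isCompact_univ_pi (fun _ => isCompact_closedBall 0 1)
  have hset : {x : ℝ | ∃ w : Fin d → ℂ, (∀ j, ‖w j‖ ≤ 1) ∧
      x = ‖MvPolynomial.eval w p‖}
      = (fun w => ‖MvPolynomial.eval w p‖) '' {w : Fin d → ℂ | ∀ j, ‖w j‖ ≤ 1} := by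
    ext x; constructor
    · rintro ⟨w, hw, rfl⟩; exact ⟨w, hw, rfl⟩
    · rintro ⟨w, hw, rfl⟩; exact ⟨w, hw, rfl⟩
  have hbdd : BddAbove {x : ℝ | ∃ w : Fin d → ℂ, (∀ j, ‖w j‖ ≤ 1) ∧
      x = ‖MvPolynomial.eval w p‖} := by
    rw [hset]
    exact (hcompact.image (continuous_norm.comp (MvPolynomial.continuous_eval p))).bddAbove
  have hpds_nonneg : 0 ≤ polydiscSup p := by
    have h0 : ‖MvPolynomial.eval (0 : Fin d → ℂ) p‖ ∈
        {x : ℝ | ∃ w : Fin d → ℂ, (∀ j, ‖w j‖ ≤ 1) ∧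
          x = ‖MvPolynomial.eval w p‖} :=
      ⟨0, fun j => by simp, rfl⟩
    exact le_trans (norm_nonneg _) (le_csSup hbdd h0)
  -- analyticity of w ↦ evalPolyAt (T w) p
  have hlist : ∀ (m : Fin d →₀ ℕ) (l : List (Fin d)),
      AnalyticOnNhd ℂ (fun w => (l.map fun j => T w j ^ m j).prod) Uo := by
    intro m l
    induction l with
    | nil => simpa using (analyticOnNhd_const : AnalyticOnNhd ℂ (fun _ => (1 : H →L[ℂ] H)) Uo)
    | cons a l ih =>
      simp only [List.map_cons, List.prod_cons]
      exact ((hT a).pow (m a)).mul ih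
  have hanal : AnalyticOnNhd ℂ (fun w => evalPolyAt (T w) p) Uo := by
    unfold evalPolyAt
    apply Finset.analyticOnNhd_fun_sum
    intro m _
    have := (analyticOnNhd_const :
        AnalyticOnNhd ℂ (fun _ : Fin n → ℂ => MvPolynomial.coeff m p) Uo).smul
      (by simpa only [List.ofFn_eq_map] using hlist m (List.finRange d))
    simpa only [List.ofFn_eq_map] using this
  -- main estimate via vectors
  set A := evalPolyAt (T z) p with hA
  refine ContinuousLinearMap.opNorm_le_bound _ hpds_nonneg ?_
  intro x
  by_cases hAx : A x = 0
  · rw [hAx, norm_zero]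
    positivity
  -- the scalar analytic function
  set y := A x with hy
  set f : (Fin n → ℂ) → ℂ := fun w => inner ℂ y (evalPolyAt (T w) p x) with hf
  have hfanal : AnalyticOnNhd ℂ f Uo := by
    have h1 : AnalyticOnNhd ℂ (fun w => evalPolyAt (T w) p x) Uo :=
      (ContinuousLinearMap.apply ℂ H x).comp_analyticOnNhd hanal
    exact (innerSL ℂ y).comp_analyticOnNhd h1
  have hfeq := hbdry Uo f hUo hXUo hfanal
  set C : ℝ := ‖y‖ * (polydiscSup p * ‖x‖) with hC
  have hCnn : 0 ≤ C := by positivity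
  have hKle : sSup ((fun w => ‖f w‖) '' K) ≤ C := by
    apply Real.sSup_le _ hCnn
    rintro r ⟨w, hw, rfl⟩
    have hnorm : ‖evalPolyAt (T w) p‖ ≤ polydiscSup p := hvN w hw p
    calc ‖f w‖ ≤ ‖y‖ * ‖evalPolyAt (T w) p x‖ := by
          simpa using norm_inner_le_norm (𝕜 := ℂ) y (evalPolyAt (T w) p x)
      _ ≤ ‖y‖ * (polydiscSup p * ‖x‖) := by
          apply mul_le_mul_of_nonneg_left _ (norm_nonneg y)
          calc ‖evalPolyAt (T w) p x‖ ≤ ‖evalPolyAt (T w) p‖ * ‖x‖ :=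
                (evalPolyAt (T w) p).le_opNorm x
            _ ≤ polydiscSup p * ‖x‖ := by
                exact mul_le_mul_of_nonneg_right hnorm (norm_nonneg x)
  have hbddX : BddAbove ((fun w => ‖f w‖) '' X) :=
    (hX.image_of_continuousOn
      (continuous_norm.comp_continuousOn (hfanal.continuousOn.mono hXUo))).bddAbove
  have hzle : ‖f z‖ ≤ C := by
    have hmem : ‖f z‖ ∈ (fun w => ‖f w‖) '' X := ⟨z, hz, rfl⟩
    calc ‖f z‖ ≤ sSup ((fun w => ‖f w‖) '' X) := le_csSup hbddX hmem
      _ = sSup ((fun w => ‖f w‖) '' K) := hfeq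
      _ ≤ C := hKle
  -- conclude
  have hfz : ‖f z‖ = ‖A x‖ ^ 2 := by
    have : f z = ((‖A x‖ : ℂ)) ^ 2 := by
      rw [hf]
      simpa [hA, hy] using inner_self_eq_norm_sq_to_K (𝕜 := ℂ) (A x)
    rw [this]
    simp
  have hAxpos : 0 < ‖A x‖ := norm_pos_iff.mpr hAx
  have : ‖A x‖ ^ 2 ≤ ‖A x‖ * (polydiscSup p * ‖x‖) := by
    rw [← hfz]; simpa [hC, hy] using hzle
  nlinarith [hAxpos]
end

section
/- Let X be the closure in ℂ^{|𝓘|} of the set of commuting families (w_{I,j})_{(I,j) ∈ 𝓘} with 0 < |w_{I,j}| ≤ 1, where 𝓘 = {(I,j) : I ∈ ℕ^d, |I| ≤ N, 1 ≤ j ≤ d}, and let X₀ = {(w_{I,j}) ∈ X : |w_{I,j}| = 1 for all (I,j)}. Then for every function f analytic in a neighborhood of X, sup_{w ∈ X} |f(w)| = sup_{w ∈ X₀} |f(w)|; i.e., the Shilov boundary of X is contained in X₀. -/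
/-- The finite coordinate space `ℂ^𝓘`, where `𝓘` indexes pairs `(I, j)` with `I ∈ ℕ^d`,
`|I| ≤ N`, `1 ≤ j ≤ d`; multi-indices with `|I| ≤ N` have all coordinates `≤ N`, so they
are encoded as elements of `Fin d → Fin (N+1)`. -/
abbrev WeightIndex (d N : ℕ) := (Fin d → Fin (N + 1)) × Fin d

/-- Restriction of a full weight family to the coordinates `(I, j)` with `|I| ≤ N`
(coordinates of the encoding not corresponding to such a pair are set to `0`). -/
noncomputable def restrictWeights (d N : ℕ) (w : (Fin d → ℕ) → Fin d → ℂ) :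
    WeightIndex d N → ℂ :=
  fun p => if (∑ i, (p.1 i : ℕ)) ≤ N then w (fun i => (p.1 i : ℕ)) p.2 else 0

/-- `X`: the closure of the set of commuting families `(w_{I,j})_{|I| ≤ N}` with
`0 < |w_{I,j}| ≤ 1`. -/
noncomputable def weightDomain (d N : ℕ) : Set (WeightIndex d N → ℂ) :=
  closure (restrictWeights d N ''
    {w : (Fin d → ℕ) → Fin d → ℂ |
      (∀ (I : Fin d → ℕ) (j : Fin d), (∑ i, I i) ≤ N →
        0 < ‖w I j‖ ∧ ‖w I j‖ ≤ 1) ∧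
      (∀ (I : Fin d → ℕ) (j k : Fin d), (∑ i, I i) + 1 ≤ N →
        w I j * w (I + Pi.single j 1) k = w I k * w (I + Pi.single k 1) j)})

/-- `X₀ ⊆ X`: the families all of whose entries are unimodular. -/
noncomputable def weightDomainUnimodular (d N : ℕ) : Set (WeightIndex d N → ℂ) :=
  {v ∈ weightDomain d N |
    ∀ p : WeightIndex d N, (∑ i, (p.1 i : ℕ)) ≤ N → ‖v p‖ = 1}

/-- The generating set of commuting families. -/
def weightSet (d N : ℕ) : Set ((Fin d → ℕ) → Fin d → ℂ) :=
  {w : (Fin d → ℕ) → Fin d → ℂ |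
      (∀ (I : Fin d → ℕ) (j : Fin d), (∑ i, I i) ≤ N →
        0 < ‖w I j‖ ∧ ‖w I j‖ ≤ 1) ∧
      (∀ (I : Fin d → ℕ) (j k : Fin d), (∑ i, I i) + 1 ≤ N →
        w I j * w (I + Pi.single j 1) k = w I k * w (I + Pi.single k 1) j)}

lemma weightDomain_eq (d N : ℕ) :
    weightDomain d N = closure (restrictWeights d N '' weightSet d N) := rfl

lemma key_product (z p q : ℂ) (hp : p ≠ 0) (hq : q ≠ 0) :
    (p / (‖p‖ : ℂ) * Complex.exp (z * (Real.log ‖p‖ : ℂ))) *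
      (q / (‖q‖ : ℂ) * Complex.exp (z * (Real.log ‖q‖ : ℂ)))
    = (p * q) / (‖p * q‖ : ℂ) *
        Complex.exp (z * (Real.log ‖p * q‖ : ℂ)) := by
  rw [norm_mul, Real.log_mul (norm_ne_zero_iff.mpr hp) (norm_ne_zero_iff.mpr hq),
    Complex.ofReal_add, mul_add, Complex.exp_add, Complex.ofReal_mul]
  ring

lemma sum_single_index {d : ℕ} (I : Fin d → ℕ) (j : Fin d) :
    (∑ i : Fin d, (I + Pi.single j 1 : Fin d → ℕ) i) = (∑ i : Fin d, I i) + 1 := by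
  simp [Pi.add_apply, Finset.sum_add_distrib, Finset.sum_pi_single']

/-- The analytic family interpolating between `w` and its unimodular part. -/
noncomputable def wfam (w : (Fin d → ℕ) → Fin d → ℂ) (z : ℂ) :
    (Fin d → ℕ) → Fin d → ℂ :=
  fun I j => (w I j / (‖w I j‖ : ℂ)) *
    Complex.exp (z * (Real.log ‖w I j‖ : ℂ))

lemma abs_wfam (w : (Fin d → ℕ) → Fin d → ℂ) (z : ℂ) (I : Fin d → ℕ) (j : Fin d)
    (h : w I j ≠ 0) :
    ‖wfam w z I j‖ = Real.exp (z.re * Real.log ‖w I j‖) := by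
  have ha : ‖w I j‖ ≠ 0 := norm_ne_zero_iff.mpr h
  rw [wfam, norm_mul, norm_div, Complex.norm_real, norm_norm,
    div_self ha, one_mul, Complex.norm_exp, mul_comm z, Complex.re_ofReal_mul, mul_comm]

lemma wfam_mem {d N : ℕ} {w : (Fin d → ℕ) → Fin d → ℂ} (hw : w ∈ weightSet d N)
    (z : ℂ) (hz : 0 ≤ z.re) : wfam w z ∈ weightSet d N := by
  obtain ⟨h1, h2⟩ := hw
  constructor
  · intro I j hI
    obtain ⟨hpos, hle⟩ := h1 I j hI
    have hne : w I j ≠ 0 := by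
      intro h; rw [h] at hpos; simp at hpos
    rw [abs_wfam w z I j hne]
    refine ⟨Real.exp_pos _, Real.exp_le_one_iff.2 ?_⟩
    exact mul_nonpos_of_nonneg_of_nonpos hz (Real.log_nonpos (norm_nonneg _) hle)
  · intro I j k hI
    have hI0 : (∑ i, I i) ≤ N := le_trans (Nat.le_succ _) hI
    have hIj : (∑ i : Fin d, (I + Pi.single j 1 : Fin d → ℕ) i) ≤ N := by rw [sum_single_index]; exact hI
    have hIk : (∑ i : Fin d, (I + Pi.single k 1 : Fin d → ℕ) i) ≤ N := by rw [sum_single_index]; exact hI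
    have hne : ∀ (I' : Fin d → ℕ) (j' : Fin d), (∑ i, I' i) ≤ N → w I' j' ≠ 0 := by
      intro I' j' hI' h
      have := (h1 I' j' hI').1
      rw [h] at this; simp at this
    show wfam w z I j * wfam w z (I + Pi.single j 1) k
        = wfam w z I k * wfam w z (I + Pi.single k 1) j
    unfold wfam
    rw [key_product z _ _ (hne I j hI0) (hne _ k hIj),
      key_product z _ _ (hne I k hI0) (hne _ j hIk), h2 I j k hI]

lemma restrict_mem_domain {d N : ℕ} {w : (Fin d → ℕ) → Fin d → ℂ}
    (hw : w ∈ weightSet d N) : restrictWeights d N w ∈ weightDomain d N :=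
  subset_closure ⟨w, hw, rfl⟩

lemma abs_restrict_le {d N : ℕ} {w : (Fin d → ℕ) → Fin d → ℂ}
    (hw : w ∈ weightSet d N) (p : WeightIndex d N) :
    ‖restrictWeights d N w p‖ ≤ 1 := by
  unfold restrictWeights
  split_ifs with h
  · exact (hw.1 _ _ h).2
  · simp

lemma weightDomain_compact (d N : ℕ) : IsCompact (weightDomain d N) := by
  have hsub : restrictWeights d N '' weightSet d N ⊆ Metric.closedBall 0 1 := by
    rintro v ⟨w, hw, rfl⟩
    rw [Metric.mem_closedBall, dist_zero_right]
    refine (pi_norm_le_iff_of_nonneg zero_le_one).2 fun p => ?_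
    exact abs_restrict_le hw p
  refine IsCompact.of_isClosed_subset (isCompact_closedBall (0 : WeightIndex d N → ℂ) 1)
    ?_ ?_
  · rw [weightDomain_eq]; exact isClosed_closure
  · rw [weightDomain_eq]
    exact closure_minimal hsub Metric.isClosed_closedBall

lemma one_mem_weightSet (d N : ℕ) :
    (fun _ _ => 1 : (Fin d → ℕ) → Fin d → ℂ) ∈ weightSet d N := by
  constructor
  · intro I j _; simp
  · intro I j k _; simp

lemma one_mem_unimodular (d N : ℕ) :
    restrictWeights d N (fun _ _ => 1) ∈ weightDomainUnimodular d N := by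
  refine ⟨restrict_mem_domain (one_mem_weightSet d N), ?_⟩
  intro p hp
  simp [restrictWeights, hp]

/-- For every function `f` analytic in a neighbourhood of `X`,
`sup_X |f| = sup_{X₀} |f|`; that is, the Shilov boundary of `X` is contained in `X₀`. -/
theorem shilov_boundary_of_weight_domain
    (d N : ℕ) (V : Set (WeightIndex d N → ℂ)) (f : (WeightIndex d N → ℂ) → ℂ)
    (hV : IsOpen V) (hXV : weightDomain d N ⊆ V) (hf : AnalyticOnNhd ℂ f V) :
    sSup ((fun v => ‖f v‖) '' weightDomain d N)
      = sSup ((fun v => ‖f v‖) '' weightDomainUnimodular d N) := by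
  classical
  set F : (WeightIndex d N → ℂ) → ℝ := fun v => ‖f v‖ with hF
  have hXc : IsCompact (weightDomain d N) := weightDomain_compact d N
  have hfc : ContinuousOn f V := hf.continuousOn
  have hFc : ContinuousOn F (weightDomain d N) :=
    continuous_norm.comp_continuousOn (hfc.mono hXV)
  have hbdd : BddAbove (F '' weightDomain d N) := (hXc.image_of_continuousOn hFc).bddAbove
  have hsub0 : weightDomainUnimodular d N ⊆ weightDomain d N := fun v hv => hv.1
  have hbdd0 : BddAbove (F '' weightDomainUnimodular d N) :=
    hbdd.mono (Set.image_mono (f := F) hsub0)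
  have hne0 : (F '' weightDomainUnimodular d N).Nonempty :=
    ⟨_, Set.mem_image_of_mem F (one_mem_unimodular d N)⟩
  set M := sSup (F '' weightDomain d N) with hM
  set M₀ := sSup (F '' weightDomainUnimodular d N) with hM₀
  have hM₀nonneg : 0 ≤ M₀ :=
    le_trans (norm_nonneg _)
      (le_csSup hbdd0 (Set.mem_image_of_mem F (one_mem_unimodular d N)))
  have key : ∀ w ∈ weightSet d N, F (restrictWeights d N w) ≤ M₀ := by
    intro w hw
    set W : ℂ → WeightIndex d N → ℂ := fun z => restrictWeights d N (wfam w z) with hWdef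
    have hWmem : ∀ z : ℂ, 0 ≤ z.re → W z ∈ weightDomain d N := fun z hz =>
      subset_closure ⟨wfam w z, wfam_mem hw z hz, rfl⟩
    have hne : ∀ p : WeightIndex d N, (∑ i, (p.1 i : ℕ)) ≤ N →
        w (fun i => (p.1 i : ℕ)) p.2 ≠ 0 := by
      intro p hp h
      have := (hw.1 _ p.2 hp).1
      rw [h] at this; simp at this
    have hWdiff : Differentiable ℂ W := by
      rw [differentiable_pi]
      intro p
      by_cases h : (∑ i, (p.1 i : ℕ)) ≤ N
      · have heq : (fun z => W z p) = fun z =>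
            (w (fun i => (p.1 i : ℕ)) p.2 /
              (‖w (fun i => (p.1 i : ℕ)) p.2‖ : ℂ)) *
            Complex.exp (z * (Real.log ‖w (fun i => (p.1 i : ℕ)) p.2‖ : ℂ)) := by
          funext z
          simp only [hWdef, restrictWeights, if_pos h, wfam]
        rw [heq]
        exact ((differentiable_id.mul_const _).cexp).const_mul _
      · have heq : (fun z => W z p) = fun _ => 0 := by
          funext z
          simp only [hWdef, restrictWeights, if_neg h]
        rw [heq]
        exact differentiable_const 0
    set g : ℂ → ℂ := fun z => f (W z) with hg
    have hgdiff : ∀ z : ℂ, 0 ≤ z.re → DifferentiableAt ℂ g z := by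
      intro z hz
      exact ((hf _ (hXV (hWmem z hz))).differentiableAt).comp z (hWdiff z)
    have hd : DiffContOnCl ℂ g {z : ℂ | 0 < z.re} := by
      constructor
      · exact fun z hz => (hgdiff z (le_of_lt hz)).differentiableWithinAt
      · rw [Complex.closure_setOf_lt_re]
        exact fun z hz => (hgdiff z hz).continuousAt.continuousWithinAt
    have hgM : ∀ z : ℂ, 0 ≤ z.re → ‖g z‖ ≤ M := by
      intro z hz
      have : F (W z) ≤ M := le_csSup hbdd ⟨W z, hWmem z hz, rfl⟩
      simpa [hg, hF] using this
    have him : ∀ x : ℝ, ‖g ((x : ℂ) * Complex.I)‖ ≤ M₀ := by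
      intro x
      have hre : ((x : ℂ) * Complex.I).re = 0 := by simp
      have hmem0 : W ((x : ℂ) * Complex.I) ∈ weightDomainUnimodular d N := by
        refine ⟨hWmem _ (by rw [hre]), ?_⟩
        intro p hp
        simp only [hWdef, restrictWeights, if_pos hp]
        rw [abs_wfam w _ _ _ (hne p hp), hre, zero_mul, Real.exp_zero]
      have : F (W ((x : ℂ) * Complex.I)) ≤ M₀ := le_csSup hbdd0 ⟨_, hmem0, rfl⟩
      simpa [hg, hF] using this
    have h1 : ‖g 1‖ ≤ M₀ := by
      refine PhragmenLindelof.right_half_plane_of_bounded_on_real hd ?_ ?_ him (by norm_num)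
      · refine ⟨1, one_lt_two, 0, ?_⟩
        rw [Asymptotics.isBigO_iff]
        refine ⟨M, ?_⟩
        rw [Filter.eventually_inf_principal]
        refine Filter.Eventually.of_forall fun z hz => ?_
        simp only [zero_mul, Real.rpow_one, Real.exp_zero, norm_one, mul_one]
        exact hgM z (le_of_lt hz)
      · refine Filter.isBoundedUnder_of_eventually_le (a := M) ?_
        filter_upwards [Filter.eventually_ge_atTop (0 : ℝ)] with x hx
        exact hgM x (by simpa using hx)
    have hW1 : W 1 = restrictWeights d N w := by
      funext p
      simp only [hWdef, restrictWeights]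
      split_ifs with h
      · have hane : (‖w (fun i => (p.1 i : ℕ)) p.2‖ : ℂ) ≠ 0 :=
          Complex.ofReal_ne_zero.mpr (norm_ne_zero_iff.mpr (hne p h))
        rw [wfam, one_mul, ← Complex.ofReal_exp,
          Real.exp_log (norm_pos_iff.mpr (hne p h)), div_mul_cancel₀ _ hane]
      · rfl
    have : ‖g 1‖ = F (restrictWeights d N w) := by
      rw [← hW1, hF]
    rw [← this]
    exact h1
  have hXle : ∀ v ∈ weightDomain d N, F v ≤ M₀ := by
    have hTclosed : IsClosed (weightDomain d N ∩ F ⁻¹' Set.Iic M₀) := by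
      refine hFc.preimage_isClosed_of_isClosed ?_ isClosed_Iic
      rw [weightDomain_eq]; exact isClosed_closure
    have hsubT : restrictWeights d N '' weightSet d N ⊆
        weightDomain d N ∩ F ⁻¹' Set.Iic M₀ := by
      rintro v ⟨w, hw, rfl⟩
      exact ⟨restrict_mem_domain hw, key w hw⟩
    intro v hv
    have hcl : weightDomain d N ⊆ weightDomain d N ∩ F ⁻¹' Set.Iic M₀ := by
      rw [weightDomain_eq]
      exact closure_minimal hsubT hTclosed
    exact (hcl hv).2
  refine le_antisymm ?_ (csSup_le_csSup hbdd hne0 (Set.image_mono (f := F) hsub0))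
  refine Real.sSup_le ?_ hM₀nonneg
  rintro x ⟨v, hv, rfl⟩
  exact hXle v hv
end
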